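/- Characterisation of types: for any type T of the revised Vectorial Lambda Calculus, there exist n, m ∈ ℕ, scalars α₁,…,αₙ, β₁,…,βₘ, pairwise distinct unit types U₁,…,Uₙ and pairwise distinct general type variables 𝕏₁,…,𝕏ₘ such that T ≡ Σᵢ₌₁ⁿ αᵢ·Uᵢ + Σⱼ₌₁ᵐ βⱼ·𝕏ⱼ. -/

import Mathlib

/- Types of λvec_R: general types and unit types (mutual) -/
mutual
inductive UTy (S : Type) : Type where
  | uvar : ℕ → UTy S
  | arrow : UTy S → Ty S → UTy S
  | fallU : ℕ → UTy S → UTy S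
  | fallG : ℕ → UTy S → UTy S
inductive Ty (S : Type) : Type where
  | unit : UTy S → Ty S
  | smul : S → Ty S → Ty S
  | add : Ty S → Ty S → Ty S
  | gvar : ℕ → Ty S
end

/- Type equivalence: the smallest congruence with the weak-module axioms -/
mutual
inductive UEquiv {S : Type} [CommRing S] : UTy S → UTy S → Prop where
  | refl (U : UTy S) : UEquiv U U
  | symm : UEquiv U V → UEquiv V U
  | trans : UEquiv U V → UEquiv V W → UEquiv U W
  | arrow : UEquiv U V → TEquiv T R → UEquiv (.arrow U T) (.arrow V R)
  | fallU : UEquiv U V → UEquiv (.fallU X U) (.fallU X V)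
  | fallG : UEquiv U V → UEquiv (.fallG X U) (.fallG X V)
inductive TEquiv {S : Type} [CommRing S] : Ty S → Ty S → Prop where
  | refl (T : Ty S) : TEquiv T T
  | symm : TEquiv T R → TEquiv R T
  | trans : TEquiv T R → TEquiv R P → TEquiv T P
  | unit : UEquiv U V → TEquiv (.unit U) (.unit V)
  | smul : TEquiv T R → TEquiv (.smul a T) (.smul a R)
  | addL : TEquiv T R → TEquiv (.add T P) (.add R P)
  | addR : TEquiv T R → TEquiv (.add P T) (.add P R)
  | one_smul (T : Ty S) : TEquiv (.smul 1 T) T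
  | smul_smul : TEquiv (.smul a (.smul b T)) (.smul (a*b) T)
  | smul_add : TEquiv (.add (.smul a T) (.smul a R)) (.smul a (.add T R))
  | add_smul : TEquiv (.add (.smul a T) (.smul b T)) (.smul (a+b) T)
  | comm : TEquiv (.add T R) (.add R T)
  | assoc : TEquiv (.add T (.add R P)) (.add (.add T R) P)
end

/- substitution of a unit type variable by a unit type -/
mutual
def UTy.substU {S : Type} : UTy S → ℕ → UTy S → UTy S
  | .uvar m, X, A => if m = X then A else .uvar m
  | .arrow U T, X, A => .arrow (U.substU X A) (T.substU X A)
  | .fallU m U, X, A => if m = X then .fallU m U else .fallU m (U.substU X A)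
  | .fallG m U, X, A => .fallG m (U.substU X A)
def Ty.substU {S : Type} : Ty S → ℕ → UTy S → Ty S
  | .unit U, X, A => .unit (U.substU X A)
  | .smul a T, X, A => .smul a (T.substU X A)
  | .add T R, X, A => .add (T.substU X A) (R.substU X A)
  | .gvar m, _, _ => .gvar m
end

/- substitution of a general type variable by a general type -/
mutual
def UTy.substG {S : Type} : UTy S → ℕ → Ty S → UTy S
  | .uvar m, _, _ => .uvar m
  | .arrow U T, X, A => .arrow (U.substG X A) (T.substG X A)
  | .fallU m U, X, A => .fallU m (U.substG X A)
  | .fallG m U, X, A => if m = X then .fallG m U else .fallG m (U.substG X A)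
def Ty.substG {S : Type} : Ty S → ℕ → Ty S → Ty S
  | .unit U, X, A => .unit (U.substG X A)
  | .smul a T, X, A => .smul a (T.substG X A)
  | .add T R, X, A => .add (T.substG X A) (R.substG X A)
  | .gvar m, X, A => if m = X then A else .gvar m
end

/- free type variables; a variable is (false, n) for a unit variable X_n
   and (true, n) for a general variable 𝕏_n -/
mutual
def UTy.fv {S : Type} : UTy S → Set (Bool × ℕ)
  | .uvar n => {(false, n)}
  | .arrow U T => U.fv ∪ T.fv
  | .fallU n U => U.fv \ {(false, n)}
  | .fallG n U => U.fv \ {(true, n)}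
def Ty.fv {S : Type} : Ty S → Set (Bool × ℕ)
  | .unit U => U.fv
  | .smul _ T => T.fv
  | .add T R => T.fv ∪ R.fv
  | .gvar n => {(true, n)}
end
/- a single substitution item: a type variable together with a type of the matching kind -/
inductive TSub (S : Type) : Type where
  | u : ℕ → UTy S → TSub S
  | g : ℕ → Ty S → TSub S

def TSub.var {S : Type} : TSub S → Bool × ℕ
  | .u X _ => (false, X)
  | .g X _ => (true, X)

def Ty.applySub {S : Type} : Ty S → TSub S → Ty S
  | T, .u X A => T.substU X A
  | T, .g X A => T.substG X A

def UTy.applySub {S : Type} : UTy S → TSub S → UTy S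
  | U, .u X A => U.substU X A
  | U, .g X A => U.substG X A

def Ty.applySubs {S : Type} (T : Ty S) (σ : List (TSub S)) : Ty S := σ.foldl Ty.applySub T
def UTy.applySubs {S : Type} (U : UTy S) (σ : List (TSub S)) : UTy S := σ.foldl UTy.applySub U

/- ∀X.U for a variable of either kind, and iterated foralls -/
def mkForall {S : Type} (X : Bool × ℕ) (U : UTy S) : UTy S :=
  if X.1 then .fallG X.2 U else .fallU X.2 U
def mkForalls {S : Type} (Xs : List (Bool × ℕ)) (U : UTy S) : UTy S := Xs.foldr mkForall U

/- the linear combination Σᵢ αᵢ·Tᵢ represented by a (nonempty) list of pairs -/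
def combo {S : Type} : List (S × Ty S) → Ty S
  | [] => .gvar 0
  | [p] => .smul p.1 p.2
  | p :: q :: L => .add (.smul p.1 p.2) (combo (q :: L))

/- sum of the scalars of a linear combination -/
def weightOf {S : Type} [CommRing S] {α : Type} (L : List (S × α)) : S := (L.map Prod.fst).sum

/- Terms of λvec_R -/
inductive Term (S : Type) : Type where
  | var : ℕ → Term S
  | lam : ℕ → Term S → Term S
  | app : Term S → Term S → Term S
  | smul : S → Term S → Term S
  | add : Term S → Term S → Term S

/- basis terms: variables and abstractions -/
inductive IsBasis {S : Type} : Term S → Prop where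
  | var : IsBasis (.var x)
  | lam : IsBasis (.lam x t)

def Term.fv {S : Type} : Term S → Set ℕ
  | .var x => {x}
  | .lam x t => t.fv \ {x}
  | .app t r => t.fv ∪ r.fv
  | .smul _ t => t.fv
  | .add t r => t.fv ∪ r.fv

/- term substitution t[b/x] -/
def Term.subst {S : Type} : Term S → ℕ → Term S → Term S
  | .var y, x, b => if y = x then b else .var y
  | .lam y t, x, b => if y = x then .lam y t else .lam y (t.subst x b)
  | .app t r, x, b => .app (t.subst x b) (r.subst x b)
  | .smul a t, x, b => .smul a (t.subst x b)
  | .add t r, x, b => .add (t.subst x b) (r.subst x b)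

/- typing contexts: partial maps from term variables to unit types -/
def Ctx (S : Type) : Type := ℕ → Option (UTy S)

def Ctx.update {S : Type} (Γ : Ctx S) (x : ℕ) (U : UTy S) : Ctx S :=
  fun y => if y = x then some U else Γ y

def Ctx.fv {S : Type} (Γ : Ctx S) : Set (Bool × ℕ) :=
  {v | ∃ x U, Γ x = some U ∧ v ∈ UTy.fv U}

def Ctx.applySub {S : Type} (Γ : Ctx S) (s : TSub S) : Ctx S :=
  fun x => (Γ x).map (fun U => U.applySub s)
/- Sized typing judgement: `TypesN n Γ t T` means Γ ⊢ t : T has a derivation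
   with n sequents. -/
inductive TypesN {S : Type} [CommRing S] : ℕ → Ctx S → Term S → Ty S → Prop where
  | ax : Γ x = some U → TypesN 1 Γ (.var x) (.unit U)
  | equiv : TypesN n Γ t T → TEquiv T R → TypesN (n+1) Γ t R
  | arrI : TypesN n (Γ.update x U) t T → TypesN (n+1) Γ (.lam x t) (.unit (.arrow U T))
  | arrE (Xs : List (Bool × ℕ)) (U : UTy S) (L : List (S × Ty S)) (M : List (S × List (TSub S))) :
      L ≠ [] → M ≠ [] →
      (∀ q ∈ M, q.2.map TSub.var = Xs) →
      TypesN n Γ t (combo (L.map fun p => (p.1, Ty.unit (mkForalls Xs (.arrow U p.2))))) →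
      TypesN m Γ r (combo (M.map fun q => (q.1, (Ty.unit U).applySubs q.2))) →
      TypesN (n+m+1) Γ (.app t r)
        (combo (L.flatMap fun p => M.map fun q => (p.1 * q.1, p.2.applySubs q.2)))
  | fallI (L : List (S × UTy S)) (X : Bool × ℕ) :
      L ≠ [] → X ∉ Γ.fv →
      TypesN n Γ t (combo (L.map fun p => (p.1, Ty.unit p.2))) →
      TypesN (n+1) Γ t (combo (L.map fun p => (p.1, Ty.unit (mkForall X p.2))))
  | fallE (L : List (S × UTy S)) (s : TSub S) :
      L ≠ [] →
      TypesN n Γ t (combo (L.map fun p => (p.1, Ty.unit (mkForall s.var p.2)))) →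
      TypesN (n+1) Γ t (combo (L.map fun p => (p.1, (Ty.unit p.2).applySub s)))
  | addI : TypesN n Γ t T → TypesN m Γ r R → TypesN (n+m+1) Γ (.add t r) (.add T R)
  | oneE : TypesN n Γ (.smul 1 t) T → TypesN (n+1) Γ t T
  | sum (L : List (ℕ × S × Ty S)) :
      L ≠ [] →
      (∀ p ∈ L, TypesN p.1 Γ t p.2.2) →
      TypesN ((L.map Prod.fst).sum + 1) Γ (.smul (weightOf (L.map Prod.snd)) t)
        (combo (L.map Prod.snd))

/- the typing judgement Γ ⊢ t : T -/
def Types {S : Type} [CommRing S] (Γ : Ctx S) (t : Term S) (T : Ty S) : Prop :=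
  ∃ n, TypesN n Γ t T

/- the relation ≺_{X,Γ} -/
inductive Prec {S : Type} [CommRing S] (Γ : Ctx S) : (Bool × ℕ) → Ty S → Ty S → Prop where
  | intro (X : Bool × ℕ) (L : List (S × UTy S)) :
      X ∉ Γ.fv → L ≠ [] →
      TEquiv R (combo (L.map fun p => (p.1, Ty.unit p.2))) →
      TEquiv T (combo (L.map fun p => (p.1, Ty.unit (mkForall X p.2)))) →
      Prec Γ X R T
  | elim (s : TSub S) (L : List (S × UTy S)) :
      s.var ∉ Γ.fv → L ≠ [] →
      TEquiv R (combo (L.map fun p => (p.1, Ty.unit (mkForall s.var p.2)))) →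
      TEquiv T (combo (L.map fun p => (p.1, (Ty.unit p.2).applySub s))) →
      Prec Γ s.var R T

/- the relation ⪯_{𝒱,Γ} -/
inductive Preceq {S : Type} [CommRing S] (Γ : Ctx S) : Set (Bool × ℕ) → Ty S → Ty S → Prop where
  | prec : V ∩ Γ.fv = ∅ → Prec Γ X R T → Preceq Γ (V ∪ {X}) R T
  | trans : Preceq Γ V₁ A B → Preceq Γ V₂ B C → Preceq Γ (V₁ ∪ V₂) A C
  | equiv : V ∩ Γ.fv = ∅ → TEquiv R T → Preceq Γ V R T

/- the reduction relation → -/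
inductive Step {S : Type} [CommRing S] : Term S → Term S → Prop where
  -- Group E
  | oneSmul : Step (.smul 1 t) t
  | smulSmul : Step (.smul a (.smul b t)) (.smul (a*b) t)
  | smulAdd : Step (.smul a (.add t r)) (.add (.smul a t) (.smul a r))
  -- Group F
  | factor : Step (.add (.smul a t) (.smul b t)) (.smul (a+b) t)
  | factorOne : Step (.add (.smul a t) t) (.smul (a+1) t)
  | factorNone : Step (.add t t) (.smul (1+1) t)
  -- Group B
  | beta : IsBasis b → Step (.app (.lam x t) b) (t.subst x b)
  -- Group A
  | appAddL : Step (.app (.add t r) u) (.add (.app t u) (.app r u))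
  | appAddR : Step (.app t (.add r u)) (.add (.app t r) (.app t u))
  | appSmulL : Step (.app (.smul a t) r) (.smul a (.app t r))
  | appSmulR : Step (.app t (.smul a r)) (.smul a (.app t r))
  -- contextual rules
  | ctxSmul : Step t r → Step (.smul a t) (.smul a r)
  | ctxAddR : Step t r → Step (.add u t) (.add u r)
  | ctxAppR : Step t r → Step (.app u t) (.app u r)
  | ctxAppL : Step t r → Step (.app t u) (.app r u)
  | ctxLam : Step t r → Step (.lam x t) (.lam x r)

/- values: sums (in any association) of pairwise-distinct abstractions, possibly scaled -/
inductive SumOf {S : Type} : Term S → List (Term S) → Prop where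
  | leaf (t : Term S) : SumOf t [t]
  | add : SumOf t L → SumOf r M → SumOf (.add t r) (L ++ M)

inductive VEntry {S : Type} : Term S → Prop where
  | lam : VEntry (.lam x t)
  | smul : VEntry (.smul a (.lam x t))

def lamOf {S : Type} : Term S → Term S
  | .smul _ b => b
  | b => b

def IsValue {S : Type} (t : Term S) : Prop :=
  ∃ L : List (Term S), SumOf t L ∧ (∀ e ∈ L, VEntry e) ∧ (L.map lamOf).Pairwise (· ≠ ·)

/- weight of types and of terms -/
def Ty.weight {S : Type} [CommRing S] : Ty S → S
  | .unit _ => 1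
  | .gvar _ => 1
  | .smul a T => a * T.weight
  | .add T R => T.weight + R.weight

def Term.weight {S : Type} [CommRing S] : Term S → S
  | .var _ => 1
  | .lam _ _ => 1
  | .app _ _ => 1
  | .smul a t => a * t.weight
  | .add t r => t.weight + r.weight
section Aux
variable {S : Type} [CommRing S]
set_option linter.unusedSectionVars false

lemma combo_cons2 (p q : S × Ty S) (M : List (S × Ty S)) :
    combo (p :: q :: M) = .add (.smul p.1 p.2) (combo (q :: M)) := rfl

lemma combo_cons' {M : List (S × Ty S)} (h : M ≠ []) (p : S × Ty S) :
    combo (p :: M) = .add (.smul p.1 p.2) (combo M) := by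
  cases M with
  | nil => exact absurd rfl h
  | cons q M => rfl

lemma tequiv_combo_cons {M M' : List (S × Ty S)} (h : M ≠ []) (h' : M' ≠ []) (p : S × Ty S)
    (e : TEquiv (combo M) (combo M')) : TEquiv (combo (p :: M)) (combo (p :: M')) := by
  rw [combo_cons' h, combo_cons' h']
  exact .addR e

lemma combo_swap (x y : S × Ty S) (l : List (S × Ty S)) :
    TEquiv (combo (x :: y :: l)) (combo (y :: x :: l)) := by
  cases l with
  | nil => exact .comm
  | cons z l => exact .trans .assoc (.trans (.addL .comm) (.symm .assoc))

lemma combo_perm {L M : List (S × Ty S)} (h : L.Perm M) : TEquiv (combo L) (combo M) := by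
  induction h with
  | nil => exact .refl _
  | cons x h ih =>
    rename_i l₁ l₂
    cases l₁ with
    | nil =>
      have : l₂ = [] := h.symm.eq_nil
      subst this
      exact .refl _
    | cons y l₁ =>
      have hl₂ : l₂ ≠ [] := by
        intro e
        subst e
        exact absurd h.length_eq (by simp)
      exact tequiv_combo_cons (by simp) hl₂ x ih
  | swap x y l => exact combo_swap _ _ _
  | trans _ _ ih1 ih2 => exact ih1.trans ih2

theorem combo_append : ∀ {L M : List (S × Ty S)}, L ≠ [] → M ≠ [] →
    TEquiv (combo (L ++ M)) (.add (combo L) (combo M))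
  | [], _, hL, _ => absurd rfl hL
  | [p], M, _, hM => by
    rw [show [p] ++ M = p :: M from rfl, combo_cons' hM]
    exact .refl _
  | p :: q :: L, M, _, hM => by
    rw [show (p :: q :: L) ++ M = p :: ((q :: L) ++ M) from rfl, combo_cons' (by simp),
      combo_cons2]
    exact .trans (.addR (combo_append (by simp) hM)) .assoc

theorem combo_smul (a : S) : ∀ {L : List (S × Ty S)}, L ≠ [] →
    TEquiv (.smul a (combo L)) (combo (L.map fun p => (a * p.1, p.2)))
  | [], hL => absurd rfl hL
  | [p], _ => TEquiv.smul_smul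
  | p :: q :: L, _ => by
    rw [combo_cons2, List.map_cons, List.map_cons, combo_cons2,
      ← List.map_cons (f := fun p => (a * p.1, p.2)) (a := q) (l := L)]
    exact .trans (.symm .smul_add) (.trans (.addL .smul_smul) (.addR (combo_smul a (by simp))))

theorem combo_merge2 (a b : S) (T : Ty S) : ∀ (M : List (S × Ty S)),
    TEquiv (combo ((a, T) :: (b, T) :: M)) (combo ((a + b, T) :: M))
  | [] => TEquiv.add_smul
  | q :: M => by
    rw [combo_cons2, combo_cons2, combo_cons' (show q :: M ≠ [] by simp)]
    exact .trans .assoc (.addL .add_smul)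

theorem combo_merge_all (T : Ty S) : ∀ (dup : List (S × Ty S)) (M : List (S × Ty S)) (a : S),
    (∀ p ∈ dup, p.2 = T) →
    TEquiv (combo ((a, T) :: (dup ++ M))) (combo ((a + (dup.map Prod.fst).sum, T) :: M))
  | [], M, a, _ => by simpa using TEquiv.refl (combo ((a, T) :: M))
  | (b, T') :: dup, M, a, h => by
    have hT : T' = T := h _ (.head _)
    subst T'
    rw [show (a, T) :: ((b, T) :: dup ++ M) = (a, T) :: (b, T) :: (dup ++ M) from rfl]
    refine .trans (combo_merge2 a b T _) ?_
    have := combo_merge_all T dup M (a + b) (fun p hp => h p (.tail _ hp))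
    rw [List.map_cons, List.sum_cons, ← add_assoc]
    exact this

theorem toCombo : ∀ (T : Ty S), ∃ L : List (S × Ty S), L ≠ [] ∧
    (∀ p ∈ L, (∃ U, p.2 = Ty.unit U) ∨ (∃ n, p.2 = Ty.gvar n)) ∧ TEquiv T (combo L)
  | .unit U => ⟨[(1, .unit U)], by simp, by intro p hp; simp at hp; subst hp; exact .inl ⟨U, rfl⟩,
      .symm (.one_smul _)⟩
  | .gvar n => ⟨[(1, .gvar n)], by simp, by intro p hp; simp at hp; subst hp; exact .inr ⟨n, rfl⟩,
      .symm (.one_smul _)⟩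
  | .smul a T => by
    obtain ⟨L, h1, h2, h3⟩ := toCombo T
    refine ⟨L.map fun p => (a * p.1, p.2), by simp [h1], ?_, (TEquiv.smul h3).trans (combo_smul a h1)⟩
    intro p hp
    simp only [List.mem_map] at hp
    obtain ⟨q, hq, rfl⟩ := hp
    exact h2 q hq
  | .add T R => by
    obtain ⟨L, h1, h2, h3⟩ := toCombo T
    obtain ⟨M, g1, g2, g3⟩ := toCombo R
    refine ⟨L ++ M, by simp [h1], ?_, ?_⟩
    · intro p hp
      rcases List.mem_append.1 hp with hp | hp
      · exact h2 p hp
      · exact g2 p hp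
    · exact .trans (.trans (.addL h3) (.addR g3)) (.symm (combo_append h1 g1))

theorem dedupe : ∀ (L : List (S × Ty S)), L ≠ [] →
    ∃ L' : List (S × Ty S), L' ≠ [] ∧ (L'.map Prod.snd).Pairwise (· ≠ ·) ∧
      TEquiv (combo L) (combo L') ∧ ∀ p ∈ L', p.2 ∈ L.map Prod.snd
  | [], h => absurd rfl h
  | (a, T) :: rest, _ => by
    classical
    set dup := rest.filter (fun p => decide (p.2 = T)) with hdup
    set rest' := rest.filter (fun p => !decide (p.2 = T)) with hrest'
    have hperm : (dup ++ rest').Perm rest := List.filter_append_perm _ rest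
    have e1 : TEquiv (combo ((a, T) :: rest)) (combo ((a, T) :: (dup ++ rest'))) :=
      combo_perm (hperm.symm.cons _)
    have hdupT : ∀ p ∈ dup, p.2 = T := by
      intro p hp
      have := (List.mem_filter.1 hp).2
      simpa using this
    have hrestT : ∀ p ∈ rest', p.2 ≠ T := by
      intro p hp
      have := (List.mem_filter.1 hp).2
      simpa using this
    have hrest_sub : ∀ p ∈ rest', p ∈ rest := fun p hp => (List.mem_filter.1 hp).1
    set s := a + (dup.map Prod.fst).sum with hs
    have e2 : TEquiv (combo ((a, T) :: (dup ++ rest'))) (combo ((s, T) :: rest')) :=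
      combo_merge_all T dup rest' a hdupT
    by_cases hr : rest' = []
    · refine ⟨[(s, T)], by simp, by simp, ?_, ?_⟩
      · refine e1.trans (e2.trans ?_)
        rw [hr]
        exact .refl _
      · intro p hp
        simp at hp
        subst hp
        simp
    · have hlen : rest'.length < ((a, T) :: rest).length := by
        have := List.length_filter_le (fun p => !decide (p.2 = T)) rest
        rw [← hrest'] at this
        simp only [List.length_cons]
        omega
      obtain ⟨R', hR1, hR2, hR3, hR4⟩ := dedupe rest' hr
      refine ⟨(s, T) :: R', by simp, ?_, ?_, ?_⟩
      · rw [List.map_cons]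
        refine List.pairwise_cons.2 ⟨?_, hR2⟩
        intro b hb
        obtain ⟨p, hp, rfl⟩ := List.mem_map.1 hb
        have := hR4 p hp
        obtain ⟨q, hq, hq2⟩ := List.mem_map.1 this
        intro e
        exact hrestT q hq (hq2.trans e.symm)
      · exact e1.trans (e2.trans (tequiv_combo_cons hr hR1 _ hR3))
      · intro p hp
        rcases List.mem_cons.1 hp with rfl | hp
        · simp
        · have := hR4 p hp
          obtain ⟨q, hq, hq2⟩ := List.mem_map.1 this
          rw [List.map_cons]
          exact List.mem_cons_of_mem _ (List.mem_map.2 ⟨q, hrest_sub q hq, hq2⟩)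
  termination_by L => L.length
  decreasing_by all_goals (simp_wf; grind [List.length_filter_le])

def ugetAux {S : Type} : S × Ty S → Option (S × UTy S)
  | (a, .unit U) => some (a, U)
  | _ => none

def xgetAux {S : Type} : S × Ty S → Option (S × ℕ)
  | (a, .gvar n) => some (a, n)
  | _ => none

lemma filterMap_uget_map : ∀ (l : List (S × Ty S)),
    ((l.filterMap ugetAux).map fun p => (p.1, Ty.unit p.2)) = l.filter fun p => (ugetAux p).isSome
  | [] => rfl
  | (a, T) :: l => by
    cases T <;>
      simp [ugetAux, List.filterMap_cons, List.filter_cons, filterMap_uget_map l]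

lemma filterMap_xget_map : ∀ (l : List (S × Ty S)),
    ((l.filterMap xgetAux).map fun q => (q.1, Ty.gvar q.2)) = l.filter fun p => (xgetAux p).isSome
  | [] => rfl
  | (a, T) :: l => by
    cases T <;>
      simp [xgetAux, List.filterMap_cons, List.filter_cons, filterMap_xget_map l]

end Aux
/- STATEMENT 0: Characterisation of types -/
theorem characterisation_of_types {S : Type} [CommRing S] (T : Ty S) :
    ∃ (Lu : List (S × UTy S)) (Lx : List (S × ℕ)),
      (Lu.map Prod.snd).Pairwise (· ≠ ·) ∧
      (Lx.map Prod.snd).Pairwise (· ≠ ·) ∧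
      (Lu ≠ [] ∨ Lx ≠ []) ∧
      TEquiv T (combo ((Lu.map fun p => (p.1, Ty.unit p.2)) ++
                       (Lx.map fun q => (q.1, Ty.gvar q.2)))) := by
  obtain ⟨L, hL1, hL2, hL3⟩ := toCombo T
  obtain ⟨L', hD1, hD2, hD3, hD4⟩ := dedupe L hL1
  -- every element of L' is a unit or a gvar
  have hform : ∀ p ∈ L', (∃ U, p.2 = Ty.unit U) ∨ (∃ n, p.2 = Ty.gvar n) := by
    intro p hp
    obtain ⟨q, hq, hq2⟩ := List.mem_map.1 (hD4 p hp)
    rw [← hq2]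
    exact hL2 q hq
  have hfilter : (L'.filter fun p => !(ugetAux p).isSome) =
      L'.filter fun p => (xgetAux p).isSome := by
    refine List.filter_congr ?_
    intro p hp
    obtain ⟨a, T'⟩ := p
    rcases hform _ hp with ⟨U, hU⟩ | ⟨n, hn⟩
    · simp only at hU
      subst hU
      simp [ugetAux, xgetAux]
    · simp only at hn
      subst hn
      simp [ugetAux, xgetAux]
  have hperm : (((L'.filterMap ugetAux).map fun p : S × UTy S => (p.1, Ty.unit p.2)) ++
      ((L'.filterMap xgetAux).map fun q : S × ℕ => (q.1, Ty.gvar q.2))).Perm L' := by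
    rw [filterMap_uget_map, filterMap_xget_map, ← hfilter]
    exact List.filter_append_perm _ L'
  refine ⟨L'.filterMap ugetAux, L'.filterMap xgetAux, ?_, ?_, ?_, ?_⟩
  · -- pairwise distinct unit types
    have h1 : ((L'.filter fun p => (ugetAux p).isSome).map Prod.snd).Pairwise (· ≠ ·) :=
      hD2.sublist ((List.filter_sublist (l := L')).map Prod.snd)
    rw [← filterMap_uget_map, List.map_map] at h1
    rw [List.pairwise_map] at h1 ⊢
    refine h1.imp ?_
    intro a b h e
    exact h (by simp [Function.comp, e])
  · have h1 : ((L'.filter fun p => (xgetAux p).isSome).map Prod.snd).Pairwise (· ≠ ·) :=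
      hD2.sublist ((List.filter_sublist (l := L')).map Prod.snd)
    rw [← filterMap_xget_map, List.map_map] at h1
    rw [List.pairwise_map] at h1 ⊢
    refine h1.imp ?_
    intro a b h e
    exact h (by simp [Function.comp, e])
  · by_contra hc
    push_neg at hc
    obtain ⟨hu, hx⟩ := hc
    rw [hu, hx] at hperm
    simp only [List.map_nil, List.nil_append] at hperm
    exact hD1 hperm.symm.eq_nil
  · exact hL3.trans (hD3.trans (combo_perm hperm.symm))
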